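/- For every natural number p, one has S(m_p) < VZ(m_p) where m_p = 1287 · 429^(12p+1), and the difference VZ(m_p) − S(m_p) tends to +∞ as p → ∞. -/
import Mathlib

open Filter

/-- `hpp m` is the largest prime power dividing `m`:
the maximum over primes `p` dividing `m` of `p ^ (ν_p m)`, with the convention `hpp 1 = 1`. -/
def hpp (m : ℕ) : ℕ := max 1 (m.primeFactors.sup fun p => p ^ m.factorization p)

/-- The Viro–Zvonilov bound. -/
def VZ (m : ℕ) : ℚ :=
  ((m : ℚ) - 3) ^ 2 / 4 + ((m : ℚ) ^ 2 - (hpp m : ℚ) ^ 2) / (4 * (hpp m : ℚ) ^ 2)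

/-- The bound of the paper's main theorem. -/
def S (m : ℕ) : ℚ := ((m : ℚ) - 1) ^ 2 / 4

/-- The degrees `m_p = 1287·429^(12p+1)`. -/
def mp (p : ℕ) : ℕ := 1287 * 429 ^ (12 * p + 1)

lemma hpp_eq (n : ℕ) (hn : 1 ≤ n) : hpp (3^(n+1) * 11^n * 13^n) = 13^n := by
  have h3 : Nat.Prime 3 := by norm_num
  have h11 : Nat.Prime 11 := by norm_num
  have h13 : Nat.Prime 13 := by norm_num
  have hne3 : (3:ℕ)^(n+1) ≠ 0 := by positivity
  have hne11 : (11:ℕ)^n ≠ 0 := by positivity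
  have hne13 : (13:ℕ)^n ≠ 0 := by positivity
  have hpf : ((3:ℕ)^(n+1) * 11^n * 13^n).primeFactors = {3, 11, 13} := by
    rw [Nat.primeFactors_mul (by positivity) hne13, Nat.primeFactors_mul hne3 hne11,
      Nat.primeFactors_pow _ (by omega), Nat.primeFactors_pow _ (by omega),
      Nat.primeFactors_pow _ (by omega), h3.primeFactors, h11.primeFactors, h13.primeFactors]
    rfl
  have hfact : ((3:ℕ)^(n+1) * 11^n * 13^n).factorization
      = Finsupp.single 3 (n+1) + Finsupp.single 11 n + Finsupp.single 13 n := by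
    rw [Nat.factorization_mul (by positivity) hne13, Nat.factorization_mul hne3 hne11,
      h3.factorization_pow, h11.factorization_pow, h13.factorization_pow]
  rw [hpp, hpf, hfact]
  rw [show ({3, 11, 13} : Finset ℕ) = insert 3 (insert 11 {13}) from rfl,
    Finset.sup_insert, Finset.sup_insert, Finset.sup_singleton]
  simp only [Finsupp.add_apply, Finsupp.single_apply]
  norm_num
  show max 1 (max (3^(n+1)) (max (11^n) (13^n))) = 13^n
  have e1 : (3:ℕ)^(n+1) ≤ 13^n := by
    calc (3:ℕ)^(n+1) ≤ 3^(2*n) := Nat.pow_le_pow_right (by norm_num) (by omega)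
    _ = 9^n := by rw [pow_mul]; norm_num
    _ ≤ 13^n := Nat.pow_le_pow_left (by norm_num) n
  have e2 : (11:ℕ)^n ≤ 13^n := Nat.pow_le_pow_left (by norm_num) n
  have e3 : 1 ≤ (13:ℕ)^n := Nat.one_le_pow _ _ (by norm_num)
  omega

lemma two_mul_le (n : ℕ) (hn : 1 ≤ n) : (2:ℚ) * 13^n ≤ 33^n := by
  induction n with
  | zero => omega
  | succ k ih =>
    rcases Nat.eq_or_lt_of_le hn with h | h
    · norm_num [← h]
    · have hk := ih (by omega)
      have : (13:ℚ)^k ≥ 0 := by positivity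
      calc (2:ℚ) * 13^(k+1) = 13 * (2 * 13^k) := by ring
        _ ≤ 13 * 33^k := by nlinarith
        _ ≤ 33^(k+1) := by rw [pow_succ]; nlinarith [pow_pos (show (0:ℚ)<33 by norm_num) k]

lemma diff_ge (n : ℕ) (hn : 1 ≤ n) :
    (33:ℚ)^n ≤ VZ (3^(n+1) * 11^n * 13^n) - S (3^(n+1) * 11^n * 13^n) := by
  have hcast : ((3^(n+1) * 11^n * 13^n : ℕ) : ℚ) = 3 * 33^n * 13^n := by
    push_cast
    rw [show (33:ℚ) = 3 * 11 from by norm_num, mul_pow]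
    ring
  have h13 : (0:ℚ) < 13^n := by positivity
  have heq : VZ (3^(n+1) * 11^n * 13^n) - S (3^(n+1) * 11^n * 13^n)
      = 9/4 * (33^n)^2 - 3 * 33^n * 13^n + 7/4 := by
    rw [VZ, S, hpp_eq n hn, hcast]
    push_cast
    field_simp
    ring
  rw [heq]
  have h1 : (1:ℚ) ≤ 33^n := one_le_pow₀ (by norm_num)
  have h2 := two_mul_le n hn
  nlinarith [sq_nonneg ((33:ℚ)^n - 1), sq_nonneg ((33:ℚ)^n)]

lemma mp_eq (p : ℕ) : mp p = 3 ^ (12*p+2+1) * 11 ^ (12*p+2) * 13 ^ (12*p+2) := by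
  rw [mp, show (429:ℕ) = 3*11*13 from rfl, mul_pow, mul_pow]; ring

/-- `S(m_p) < VZ(m_p)` for all `p`, and `VZ(m_p) − S(m_p) → +∞` as `p → ∞`. -/
theorem S_lt_VZ_mp :
    (∀ p : ℕ, S (mp p) < VZ (mp p)) ∧
      Tendsto (fun p : ℕ => VZ (mp p) - S (mp p)) atTop atTop := by
  have key : ∀ p : ℕ, (33:ℚ)^(12*p+2) ≤ VZ (mp p) - S (mp p) := by
    intro p
    rw [mp_eq]
    exact diff_ge (12*p+2) (by omega)
  constructor
  · intro p
    have := key p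
    have : (0:ℚ) < 33^(12*p+2) := by positivity
    linarith [key p]
  · apply tendsto_atTop_mono key
    have h1 : Tendsto (fun k : ℕ => (33:ℚ)^k) atTop atTop :=
      tendsto_pow_atTop_atTop_of_one_lt (by norm_num)
    exact h1.comp (tendsto_atTop_mono (fun p => by omega : ∀ p, p ≤ 12*p+2) tendsto_id)
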